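/- In a Kan complex L, if y, y' : Δ[n+1] → L are simplices such that the homotopy classes [y d^i] = [y' d^i] agree for all faces i ≠ k, then also [y d^k] = [y' d^k]. -/

import Mathlib

open CategoryTheory Simplicial Opposite

namespace SSet

/-- The `m`-simplex of `L` which is constant at a vertex `a`. -/
def vertexSimplex (L : SSet.{u}) (a : L _⦋0⦌) (m : ℕ) : L _⦋m⦌ :=
  L.map (SimplexCategory.const ⦋m⦌ ⦋0⦌ 0).op a

/-- Two `n`-simplices have the same faces.  (The quantification over `m` with
`n = m + 1` makes the statement meaningful also for `n = 0`, where it is vacuous.) -/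
def SameFaces (L : SSet.{u}) {n : ℕ} (x x' : L _⦋n⦌) : Prop :=
  ∀ (m : ℕ) (hm : n = m + 1) (i : Fin (m + 2)),
    L.δ i (cast (show L _⦋n⦌ = L _⦋m + 1⦌ by rw [hm]) x) =
      L.δ i (cast (show L _⦋n⦌ = L _⦋m + 1⦌ by rw [hm]) x')

/-- Homotopy of `n`-simplices in a simplicial set: `x` and `x'` have the same faces
and there is an `(n+1)`-simplex `y` with boundary
`(x d⁰ sⁿ⁻¹, …, x dⁿ⁻¹ sⁿ⁻¹, x, x')`. -/
def Homotopic (L : SSet.{u}) {n : ℕ} (x x' : L _⦋n⦌) : Prop :=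
  SameFaces L x x' ∧
  ∃ y : L _⦋n + 1⦌,
    L.δ (⟨n, by omega⟩ : Fin (n + 2)) y = x ∧
    L.δ (Fin.last (n + 1)) y = x' ∧
    ∀ (m : ℕ) (hm : n = m + 1) (i : Fin (n + 2)) (hi : (i : ℕ) < n),
      L.δ i y =
        cast (show L _⦋m + 1⦌ = L _⦋n⦌ by rw [hm])
          (L.σ (Fin.last m)
            (L.δ (⟨i, by omega⟩ : Fin (m + 2))
              (cast (show L _⦋n⦌ = L _⦋m + 1⦌ by rw [hm]) x)))

/-- All faces of the `n`-simplex `x` are (degeneracies of) the vertex `a`. -/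
def FacesAt (L : SSet.{u}) {n : ℕ} (x : L _⦋n⦌) (a : L _⦋0⦌) : Prop :=
  ∀ (m : ℕ) (hm : n = m + 1) (i : Fin (m + 2)),
    L.δ i (cast (show L _⦋n⦌ = L _⦋m + 1⦌ by rw [hm]) x) = vertexSimplex L a m

/-- Triviality of the `n`-th homotopy group of `L` at every base vertex:  every
`n`-simplex all of whose faces are constant at a vertex `a` is homotopic to the
constant `n`-simplex at `a`. -/
def PiTrivial (L : SSet.{u}) (n : ℕ) : Prop :=
  ∀ (a : L _⦋0⦌) (x : L _⦋n⦌), FacesAt L x a → Homotopic L x (vertexSimplex L a n)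


/-- Triviality of `π₂` at every base vertex of a simplicial set. -/
def Pi2Trivial (L : SSet.{u}) : Prop :=
  ∀ (a : L _⦋0⦌) (x : L _⦋2⦌),
    (∀ i : Fin 3, L.δ i x = vertexSimplex L a 1) → Homotopic L x (vertexSimplex L a 2)

/-- Kan complexes with the meaning `SSet.KanComplex` had in the older Mathlib:
every horn `Λ[n, i] ⟶ S` (for every `n`, including `n = 0`) extends to `Δ[n]`. -/
class OldKanComplex (S : SSet.{u}) : Prop where
  hornFilling : ∀ ⦃n : ℕ⦄ ⦃i : Fin (n + 1)⦄ (σ₀ : (Λ[n, i] : SSet.{u}) ⟶ S),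
    ∃ σ : Δ[n] ⟶ S, σ₀ = Λ[n, i].ι ≫ σ

end SSet

namespace SSet

universe u
variable {L : SSet.{u}}

/-- Elementwise form of the simplicial identity for two face maps. -/
lemma dd_apply {M : ℕ} {a b : Fin (M + 2)} (hab : a ≤ b) (z : L _⦋M + 2⦌) :
    L.δ a (L.δ b.succ z) = L.δ b (L.δ a.castSucc z) :=
  ConcreteCategory.congr_hom (SimplicialObject.δ_comp_δ (X := L) hab) z

lemma dd' {M : ℕ} (a bs b : ℕ) (hbs : bs = b + 1) (hab : a ≤ b) (hb : b ≤ M + 1)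
    (z : L _⦋M + 2⦌) :
    L.δ ⟨a, by omega⟩ (L.δ ⟨bs, by omega⟩ z) = L.δ ⟨b, by omega⟩ (L.δ ⟨a, by omega⟩ z) := by
  subst hbs
  exact dd_apply (a := ⟨a, by omega⟩) (b := ⟨b, by omega⟩) (by simp [Fin.mk_le_mk]; omega) z

lemma ds_self' {M : ℕ} (i : ℕ) (hi : i ≤ M) (z : L _⦋M⦌) :
    L.δ ⟨i, by omega⟩ (L.σ ⟨i, by omega⟩ z) = z :=
  ConcreteCategory.congr_hom (SimplicialObject.δ_comp_σ_self (X := L) (n := M) (i := ⟨i, by omega⟩)) z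

lemma ds_succ' {M : ℕ} (i is : ℕ) (his : is = i + 1) (hi : i ≤ M) (z : L _⦋M⦌) :
    L.δ ⟨is, by omega⟩ (L.σ ⟨i, by omega⟩ z) = z := by
  subst his
  exact ConcreteCategory.congr_hom (SimplicialObject.δ_comp_σ_succ (X := L) (n := M) (i := ⟨i, by omega⟩)) z

lemma ds_le' {M : ℕ} (i js j : ℕ) (hjs : js = j + 1) (hij : i ≤ j) (hj : j ≤ M)
    (z : L _⦋M + 1⦌) :
    L.δ ⟨i, by omega⟩ (L.σ ⟨js, by omega⟩ z) = L.σ ⟨j, by omega⟩ (L.δ ⟨i, by omega⟩ z) := by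
  subst hjs
  exact ConcreteCategory.congr_hom (SimplicialObject.δ_comp_σ_of_le (X := L) (n := M) (i := ⟨i, by omega⟩)
    (j := ⟨j, by omega⟩) (by simp [Fin.le_def]; omega)) z

lemma ds_gt' {M : ℕ} (is i j : ℕ) (his : is = i + 1) (hji : j < i) (hi : i ≤ M + 1)
    (z : L _⦋M + 1⦌) :
    L.δ ⟨is, by omega⟩ (L.σ ⟨j, by omega⟩ z) = L.σ ⟨j, by omega⟩ (L.δ ⟨i, by omega⟩ z) := by
  subst his
  exact ConcreteCategory.congr_hom (SimplicialObject.δ_comp_σ_of_gt (X := L) (n := M) (i := ⟨i, by omega⟩)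
    (j := ⟨j, by omega⟩) (by simp [Fin.lt_def]; omega)) z

lemma fne {N a b : ℕ} {ha : a < N} {hb : b < N} (hab : a ≠ b) :
    (⟨a, ha⟩ : Fin N) ≠ ⟨b, hb⟩ :=
  fun hh => hab (congrArg Fin.val hh)

open SimplexCategory in
/-- A Kan complex admits a filler for any compatible family of `m+2` faces
(all faces except the `p`-th one). -/
lemma exists_horn_filler (L : SSet.{u}) (hL : OldKanComplex L) {m : ℕ} (p : Fin (m + 3))
    (x : ∀ i : Fin (m + 3), i ≠ p → L _⦋m + 1⦌)
    (hx : ∀ (a b : Fin (m + 2)), a ≤ b → ∀ (hb : b.succ ≠ p) (ha : a.castSucc ≠ p),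
      L.δ a (x b.succ hb) = L.δ b (x a.castSucc ha)) :
    ∃ z : L _⦋m + 2⦌, ∀ (i : Fin (m + 3)) (hi : i ≠ p), L.δ i z = x i hi := by
  classical
  have core : ∀ {d : ℕ} (f : (⦋d⦌ : SimplexCategory) ⟶ ⦋m + 2⦌) (a b : Fin (m + 2)),
      a ≤ b → ∀ (ha : a.castSucc ≠ p) (hb : b.succ ≠ p)
      (hfa : ∀ k, f.toOrderHom k ≠ a.castSucc) (hfb : ∀ k, f.toOrderHom k ≠ b.succ),
      L.map (factor_δ f a.castSucc).op (x a.castSucc ha) =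
        L.map (factor_δ f b.succ).op (x b.succ hb) := by
    intro d f a b hab ha hb hfa hfb
    have hg := factor_δ_spec f b.succ hfb
    have hga : ∀ k, (factor_δ f b.succ).toOrderHom k ≠ a := by
      intro k hk
      apply hfa k
      have h1 : f.toOrderHom k = (factor_δ f b.succ ≫ δ b.succ).toOrderHom k := by rw [hg]
      rw [h1]
      show b.succ.succAbove ((factor_δ f b.succ).toOrderHom k) = a.castSucc
      rw [hk]
      exact Fin.succAbove_of_castSucc_lt _ _ (by simp [Fin.castSucc_lt_succ_iff, hab])
    have he := factor_δ_spec (factor_δ f b.succ) a hga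
    have key : (δ a ≫ δ b.succ : (⦋m⦌ : SimplexCategory) ⟶ ⦋m + 2⦌) = δ b ≫ δ a.castSucc :=
      SimplexCategory.δ_comp_δ hab
    have h1 : factor_δ f a.castSucc = factor_δ (factor_δ f b.succ) a ≫ δ b := by
      rw [← cancel_mono (δ a.castSucc), factor_δ_spec f a.castSucc hfa, Category.assoc, ← key,
        ← Category.assoc, he, hg]
    calc L.map (factor_δ f a.castSucc).op (x a.castSucc ha)
        = L.map (factor_δ (factor_δ f b.succ) a ≫ δ b).op (x a.castSucc ha) := by rw [h1]
      _ = L.map (factor_δ (factor_δ f b.succ) a).op (L.δ b (x a.castSucc ha)) := by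
          rw [op_comp, L.map_comp]; rfl
      _ = L.map (factor_δ (factor_δ f b.succ) a).op (L.δ a (x b.succ hb)) :=
          congrArg _ (hx a b hab hb ha).symm
      _ = L.map (factor_δ (factor_δ f b.succ) a ≫ δ a).op (x b.succ hb) := by
          rw [op_comp, L.map_comp]; rfl
      _ = L.map (factor_δ f b.succ).op (x b.succ hb) := by rw [he]
  have indep : ∀ {d : ℕ} (f : (⦋d⦌ : SimplexCategory) ⟶ ⦋m + 2⦌) (j₁ j₂ : Fin (m + 3))
      (h₁ : j₁ ≠ p) (h₂ : j₂ ≠ p) (hf₁ : ∀ k, f.toOrderHom k ≠ j₁)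
      (hf₂ : ∀ k, f.toOrderHom k ≠ j₂),
      L.map (factor_δ f j₁).op (x j₁ h₁) = L.map (factor_δ f j₂).op (x j₂ h₂) := by
    have half : ∀ {d : ℕ} (f : (⦋d⦌ : SimplexCategory) ⟶ ⦋m + 2⦌) (j₁ j₂ : Fin (m + 3))
        (hlt : j₁ < j₂) (h₁ : j₁ ≠ p) (h₂ : j₂ ≠ p) (hf₁ : ∀ k, f.toOrderHom k ≠ j₁)
        (hf₂ : ∀ k, f.toOrderHom k ≠ j₂),
        L.map (factor_δ f j₁).op (x j₁ h₁) = L.map (factor_δ f j₂).op (x j₂ h₂) := by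
      intro d f j₁ j₂ hlt h₁ h₂ hf₁ hf₂
      have hv : j₁.1 < j₂.1 := hlt
      have hv2 : j₂.1 < m + 3 := j₂.isLt
      obtain ⟨a, rfl⟩ : ∃ a : Fin (m + 2), a.castSucc = j₁ :=
        ⟨⟨j₁.1, by omega⟩, Fin.ext rfl⟩
      obtain ⟨b, rfl⟩ : ∃ b : Fin (m + 2), b.succ = j₂ :=
        ⟨⟨j₂.1 - 1, by omega⟩, Fin.ext (by simp; omega)⟩
      exact core f a b (by rw [← Fin.castSucc_lt_succ_iff]; exact hlt) h₁ h₂ hf₁ hf₂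
    intro d f j₁ j₂ h₁ h₂ hf₁ hf₂
    rcases lt_trichotomy j₁ j₂ with hlt | rfl | hlt
    · exact half f j₁ j₂ hlt h₁ h₂ hf₁ hf₂
    · rfl
    · exact (half f j₂ j₁ hlt h₂ h₁ hf₂ hf₁).symm
  have exAvoid : ∀ (D : SimplexCategoryᵒᵖ) (s : (Λ[m + 2, p] : SSet.{u}).obj D),
      ∃ j : Fin (m + 3), j ≠ p ∧ ∀ k, (stdSimplex.asOrderHom s.1) k ≠ j := by
    intro D s
    have hs := (mem_horn_iff p s.1).1 s.2
    rw [Set.ne_univ_iff_exists_notMem] at hs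
    obtain ⟨j, hj⟩ := hs
    simp only [Set.mem_union, Set.mem_range, Set.mem_singleton_iff, not_or, not_exists] at hj
    exact ⟨j, hj.2, fun k hk => hj.1 k hk⟩
  let F : ∀ (D : SimplexCategoryᵒᵖ) (s : (Λ[m + 2, p] : SSet.{u}).obj D), L.obj D := fun D s =>
    L.map (factor_δ (m := (unop D).len) ((stdSimplex.objEquiv) s.1)
      (exAvoid D s).choose).op (x _ (exAvoid D s).choose_spec.1)
  have hF : ∀ (D : SimplexCategoryᵒᵖ) (s : (Λ[m + 2, p] : SSet.{u}).obj D)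
      (j : Fin (m + 3)) (hj : j ≠ p) (hfj : ∀ k, (stdSimplex.asOrderHom s.1) k ≠ j),
      F D s = L.map (factor_δ (m := (unop D).len) ((stdSimplex.objEquiv) s.1) j).op
        (x j hj) := by
    intro D s j hj hfj
    exact indep _ _ _ (exAvoid D s).choose_spec.1 hj (exAvoid D s).choose_spec.2 hfj
  let σ₀ : (Λ[m + 2, p] : SSet.{u}) ⟶ L :=
    { app := fun D => TypeCat.ofHom (F D)
      naturality := by
        intro D₁ D₂ g
        ext s
        obtain ⟨j, hj, hfj⟩ := exAvoid D₁ s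
        have hfj' : ∀ k, (stdSimplex.asOrderHom ((Λ[m + 2, p] : SSet.{u}).map g s).1) k ≠ j := by
          intro k hk
          exact hfj (g.unop.toOrderHom k) hk
        show F D₂ ((Λ[m + 2, p] : SSet.{u}).map g s) = L.map g (F D₁ s)
        rw [hF D₂ _ j hj hfj', hF D₁ s j hj hfj]
        have hfac : factor_δ (m := (unop D₂).len)
            ((stdSimplex.objEquiv) ((Λ[m + 2, p] : SSet.{u}).map g s).1) j =
            g.unop ≫ factor_δ (m := (unop D₁).len)
              ((stdSimplex.objEquiv) s.1) j := by
          rw [← cancel_mono (δ j),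
            factor_δ_spec (m := (unop D₂).len)
              ((stdSimplex.objEquiv) ((Λ[m + 2, p] : SSet.{u}).map g s).1) j hfj',
            Category.assoc,
            factor_δ_spec (m := (unop D₁).len) ((stdSimplex.objEquiv) s.1) j hfj]
          rfl
        rw [hfac, op_comp, L.map_comp]
        rfl }
  obtain ⟨σ, hσ⟩ := hL.hornFilling σ₀
  refine ⟨σ.app (op ⦋m + 2⦌) ((stdSimplex.objEquiv).symm (𝟙 _)), ?_⟩
  intro i hi
  have hnat := ConcreteCategory.congr_hom (σ.naturality (δ i).op) ((stdSimplex.objEquiv).symm (𝟙 _))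
  have hface : (Δ[m + 2].map (δ i).op ((stdSimplex.objEquiv).symm (𝟙 _))) =
      (horn.face p i hi).1 := by
    apply (stdSimplex.objEquiv).injective
    show δ i ≫ 𝟙 _ = _
    simp [horn.face, stdSimplex.objEquiv]
    rfl
  have step1 : L.δ i (σ.app (op ⦋m + 2⦌) ((stdSimplex.objEquiv).symm (𝟙 _))) =
      σ.app (op (⦋m + 1⦌ : SimplexCategory)) (horn.face p i hi).1 := by
    rw [← hface]
    exact hnat.symm
  rw [step1]
  have step2 : σ.app (op (⦋m + 1⦌ : SimplexCategory)) (horn.face p i hi).1 =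
      σ₀.app (op (⦋m + 1⦌ : SimplexCategory)) (horn.face p i hi) := by
    rw [hσ]; rfl
  rw [step2]
  show F _ (horn.face p i hi) = x i hi
  have hmiss : ∀ k, (stdSimplex.asOrderHom (horn.face p i hi).1) k ≠ i := fun k => Fin.succAbove_ne i k
  rw [hF _ _ i hi hmiss]
  have hid : factor_δ (m := (unop (op (⦋m + 1⦌ : SimplexCategory))).len)
      ((stdSimplex.objEquiv) (horn.face p i hi).1) i = 𝟙 _ := by
    rw [← cancel_mono (δ i),
      factor_δ_spec (m := (unop (op (⦋m + 1⦌ : SimplexCategory))).len)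
        ((stdSimplex.objEquiv) (horn.face p i hi).1) i hmiss,
      Category.id_comp]
    rfl
  rw [hid]
  simp

end SSet

open CategoryTheory Simplicial SSet


/-- In a Kan complex `L`, if `y, y' : Δ[n+1] → L` are simplices such
that the homotopy classes `[y dⁱ] = [y' dⁱ]` agree for all `i ≠ k`, then also
`[y dᵏ] = [y' dᵏ]`. -/
theorem homotopic_faces (L : SSet.{u}) (hL : OldKanComplex L) {n : ℕ}
    (y y' : L _⦋n + 1⦌) (k : Fin (n + 2))
    (h : ∀ i : Fin (n + 2), i ≠ k → Homotopic L (L.δ i y) (L.δ i y')) :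
    Homotopic L (L.δ k y) (L.δ k y') := by
  obtain _ | m := n
  · -- the case `n = 0`
    have h0 : ∀ i : Fin 2, i ≠ k → ∃ H : L _⦋1⦌,
        L.δ (⟨0, by omega⟩ : Fin 2) H = L.δ i y ∧ L.δ (⟨1, by omega⟩ : Fin 2) H = L.δ i y' := by
      intro i hik
      obtain ⟨-, H, e1, e2, -⟩ := h i hik
      exact ⟨H, e1, e2⟩
    choose Hh H1 H2 using h0
    by_cases hk0 : k = ⟨0, by omega⟩
    · subst hk0
      have hne : (⟨1, by omega⟩ : Fin 2) ≠ ⟨0, by omega⟩ := fne (by omega)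
      obtain ⟨G₂, hG₂⟩ := exists_horn_filler L hL (m := 0) ⟨1, by omega⟩
        (fun i _ => if i.1 = 0 then y else Hh ⟨1, by omega⟩ hne)
        (by
          intro a b hab hb ha
          have hbv : b.1 + 1 ≠ 1 := fun hh => hb (Fin.ext hh)
          have hav : a.1 ≠ 1 := fun hh => ha (Fin.ext hh)
          have hb2 : b.1 < 2 := b.isLt
          obtain rfl : a = ⟨0, by decide⟩ := Fin.ext (show a.1 = 0 by omega)
          obtain rfl : b = ⟨1, by decide⟩ := Fin.ext (show b.1 = 1 by omega)
          dsimp only [Fin.succ_mk, Fin.castSucc_mk]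
          rw [if_neg (by omega), if_pos rfl]
          exact H1 ⟨1, by omega⟩ hne)
      have P1 : L.δ (⟨0, by omega⟩ : Fin 2) (L.δ (⟨1, by omega⟩ : Fin 3) G₂) =
          L.δ (⟨0, by omega⟩ : Fin 2) y := by
        refine (dd' (L := L) (M := 0) 0 1 0 rfl (le_refl _) (by omega) G₂).trans ?_
        rw [hG₂ ⟨0, by omega⟩ (fne (by omega))]
        dsimp only
        rw [if_pos rfl]
      have P2 : L.δ (⟨1, by omega⟩ : Fin 2) (L.δ (⟨1, by omega⟩ : Fin 3) G₂) =
          L.δ (⟨1, by omega⟩ : Fin 2) y' := by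
        refine ((dd' (L := L) (M := 0) 1 2 1 rfl (le_refl _) (by omega) G₂).symm).trans ?_
        rw [hG₂ ⟨2, by omega⟩ (fne (by omega))]
        dsimp only
        rw [if_neg (by omega)]
        exact H2 ⟨1, by omega⟩ hne
      obtain ⟨G₃, hG₃⟩ := exists_horn_filler L hL (m := 0) ⟨0, by omega⟩
        (fun i _ => if i.1 = 1 then L.δ (⟨1, by omega⟩ : Fin 3) G₂ else y')
        (by
          intro a b hab hb ha
          have hav : a.1 ≠ 0 := fun hh => ha (Fin.ext hh)
          have hb2 : b.1 < 2 := b.isLt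
          have hab2 : a.1 ≤ b.1 := hab
          obtain rfl : a = ⟨1, by decide⟩ := Fin.ext (show a.1 = 1 by omega)
          obtain rfl : b = ⟨1, by decide⟩ := Fin.ext (show b.1 = 1 by omega)
          dsimp only [Fin.succ_mk, Fin.castSucc_mk]
          rw [if_neg (by omega), if_pos rfl]
          exact P2.symm)
      refine ⟨?_, L.δ (⟨0, by omega⟩ : Fin 3) G₃, ?_, ?_, ?_⟩
      · intro m' hm' i
        exact absurd hm' (by omega)
      · refine ((dd' (L := L) (M := 0) 0 1 0 rfl (le_refl _) (by omega) G₃).symm).trans ?_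
        rw [hG₃ ⟨1, by omega⟩ (fne (by omega))]
        dsimp only
        rw [if_pos rfl]
        exact P1
      · refine ((dd' (L := L) (M := 0) 0 2 1 rfl (by omega) (by omega) G₃).symm).trans ?_
        rw [hG₃ ⟨2, by omega⟩ (fne (by omega))]
        dsimp only
        rw [if_neg (by omega)]
      · intro m' hm' i hi
        exact absurd hm' (by omega)
    · have hk1 : k = ⟨1, by omega⟩ := by
        have h2 := k.isLt
        have h0 : k.1 ≠ 0 := fun hh => hk0 (Fin.ext hh)
        exact Fin.ext (show k.1 = 1 by omega)
      subst hk1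
      have hne : (⟨0, by omega⟩ : Fin 2) ≠ ⟨1, by omega⟩ := fne (by omega)
      obtain ⟨G₁, hG₁⟩ := exists_horn_filler L hL (m := 0) ⟨1, by omega⟩
        (fun i _ => if i.1 = 0 then Hh ⟨0, by omega⟩ hne else y')
        (by
          intro a b hab hb ha
          have hbv : b.1 + 1 ≠ 1 := fun hh => hb (Fin.ext hh)
          have hav : a.1 ≠ 1 := fun hh => ha (Fin.ext hh)
          have hb2 : b.1 < 2 := b.isLt
          obtain rfl : a = ⟨0, by decide⟩ := Fin.ext (show a.1 = 0 by omega)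
          obtain rfl : b = ⟨1, by decide⟩ := Fin.ext (show b.1 = 1 by omega)
          dsimp only [Fin.succ_mk, Fin.castSucc_mk]
          rw [if_neg (by omega), if_pos rfl]
          exact (H2 ⟨0, by omega⟩ hne).symm)
      have Q1 : L.δ (⟨0, by omega⟩ : Fin 2) (L.δ (⟨1, by omega⟩ : Fin 3) G₁) =
          L.δ (⟨0, by omega⟩ : Fin 2) y := by
        refine (dd' (L := L) (M := 0) 0 1 0 rfl (le_refl _) (by omega) G₁).trans ?_
        rw [hG₁ ⟨0, by omega⟩ (fne (by omega))]
        dsimp only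
        rw [if_pos rfl]
        exact H1 ⟨0, by omega⟩ hne
      have Q2 : L.δ (⟨1, by omega⟩ : Fin 2) (L.δ (⟨1, by omega⟩ : Fin 3) G₁) =
          L.δ (⟨1, by omega⟩ : Fin 2) y' := by
        refine ((dd' (L := L) (M := 0) 1 2 1 rfl (le_refl _) (by omega) G₁).symm).trans ?_
        rw [hG₁ ⟨2, by omega⟩ (fne (by omega))]
        dsimp only
        rw [if_neg (by omega)]
      obtain ⟨G₄, hG₄⟩ := exists_horn_filler L hL (m := 0) ⟨2, by omega⟩
        (fun i _ => if i.1 = 0 then y else L.δ (⟨1, by omega⟩ : Fin 3) G₁)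
        (by
          intro a b hab hb ha
          have hbv : b.1 + 1 ≠ 2 := fun hh => hb (Fin.ext hh)
          have hb2 : b.1 < 2 := b.isLt
          have hab2 : a.1 ≤ b.1 := hab
          obtain rfl : a = ⟨0, by decide⟩ := Fin.ext (show a.1 = 0 by omega)
          obtain rfl : b = ⟨0, by decide⟩ := Fin.ext (show b.1 = 0 by omega)
          dsimp only [Fin.succ_mk, Fin.castSucc_mk]
          rw [if_neg (by omega), if_pos rfl]
          exact Q1)
      refine ⟨?_, L.δ (⟨2, by omega⟩ : Fin 3) G₄, ?_, ?_, ?_⟩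
      · intro m' hm' i
        exact absurd hm' (by omega)
      · refine (dd' (L := L) (M := 0) 0 2 1 rfl (by omega) (by omega) G₄).trans ?_
        rw [hG₄ ⟨0, by omega⟩ (fne (by omega))]
        dsimp only
        rw [if_pos rfl]
      · refine (dd' (L := L) (M := 0) 1 2 1 rfl (le_refl _) (by omega) G₄).trans ?_
        rw [hG₄ ⟨1, by omega⟩ (fne (by omega))]
        dsimp only
        rw [if_neg (by omega)]
        exact Q2
      · intro m' hm' i hi
        exact absurd hm' (by omega)
  · -- the case `n = m + 1`
    have h' : ∀ i : Fin (m + 3), i ≠ k → ∃ H : L _⦋m + 2⦌,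
        L.δ (⟨m + 1, by omega⟩ : Fin (m + 3)) H = L.δ i y ∧
        L.δ (⟨m + 2, by omega⟩ : Fin (m + 3)) H = L.δ i y' ∧
        ∀ (j : ℕ) (hj : j < m + 1),
          L.δ (⟨j, by omega⟩ : Fin (m + 3)) H =
            L.σ (Fin.last m) (L.δ (⟨j, by omega⟩ : Fin (m + 2)) (L.δ i y)) := by
      intro i hik
      obtain ⟨-, H, e1, e2, e3⟩ := h i hik
      refine ⟨H, e1, e2, ?_⟩
      intro j hj
      have e4 := e3 m rfl ⟨j, by omega⟩ (by exact hj)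
      simpa only [cast_eq] using e4
    choose Hh H1 H2 H3 using h'
    have SF : ∀ (i' : Fin (m + 3)) (hi' : i' ≠ k) (j : Fin (m + 2)),
        L.δ j (L.δ i' y) = L.δ j (L.δ i' y') := by
      intro i' hi' j
      have e := (h i' hi').1 m rfl j
      simpa only [cast_eq] using e
    have hk3 : k.1 < m + 3 := k.isLt
    have sameFaces : SameFaces L (L.δ k y) (L.δ k y') := by
      intro m' hm' i
      obtain rfl : m = m' := by omega
      simp only [cast_eq]
      have hi2 : i.1 < m + 2 := i.isLt
      rcases Nat.lt_or_ge i.1 k.1 with hik | hik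
      · refine (dd' (L := L) (M := m) i.1 k.1 (k.1 - 1) (by omega) (by omega) (by omega) y).trans
          (Eq.trans ?_
            (dd' (L := L) (M := m) i.1 k.1 (k.1 - 1) (by omega) (by omega) (by omega) y').symm)
        exact SF ⟨i.1, by omega⟩ (fne (by omega)) ⟨k.1 - 1, by omega⟩
      · refine ((dd' (L := L) (M := m) k.1 (i.1 + 1) i.1 rfl (by omega) (by omega) y).symm).trans
          (Eq.trans ?_
            (dd' (L := L) (M := m) k.1 (i.1 + 1) i.1 rfl (by omega) (by omega) y'))
        exact SF ⟨i.1 + 1, by omega⟩ (fne (by omega)) ⟨k.1, by omega⟩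
    by_cases hkl : k = Fin.last (m + 2)
    · -- `k` is the last face
      subst hkl
      -- step 1: produce `y''` with the same faces as `y` except the last one,
      -- which is the last face of `y'`
      obtain ⟨G₁, hG₁⟩ := exists_horn_filler L hL (m := m + 1) ⟨m + 2, by omega⟩
        (fun i hi => if h1 : i.1 ≤ m + 1 then
            Hh ⟨i.1, by omega⟩ (fne (by omega)) else y')
        (by
          intro a b hab hb ha
          have hab2 : a.1 ≤ b.1 := hab
          have hbv : b.1 + 1 ≠ m + 2 := fun hh => hb (Fin.ext hh)
          have hav : a.1 ≠ m + 2 := fun hh => ha (Fin.ext hh)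
          have hb3 : b.1 < m + 3 := b.isLt
          dsimp only [Fin.val_succ, Fin.coe_castSucc]
          rcases show b.1 + 1 ≤ m + 1 ∨ b.1 + 1 = m + 3 by omega with hc | hc
          · rw [dif_pos (by omega), dif_pos (by omega)]
            exact (H3 ⟨b.1 + 1, by omega⟩ _ a.1 (by omega)).trans
              ((congrArg (L.σ (Fin.last m))
                  (dd' (L := L) (M := m) a.1 (b.1 + 1) b.1 rfl (by omega) (by omega) y)).trans
                (H3 ⟨a.1, by omega⟩ _ b.1 (by omega)).symm)
          · obtain rfl : b = ⟨m + 2, Nat.add_lt_add_left (show 2 < 3 by decide) m⟩ := Fin.ext (show b.1 = m + 2 by omega)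
            rw [dif_neg (by omega), dif_pos (by omega)]
            exact (H2 ⟨a.1, by omega⟩ _).symm)
      have Q1 : ∀ (j : ℕ) (hj : j ≤ m + 1),
          L.δ (⟨j, by omega⟩ : Fin (m + 3)) (L.δ (⟨m + 2, by omega⟩ : Fin (m + 4)) G₁) =
            L.δ (⟨j, by omega⟩ : Fin (m + 3)) y := by
        intro j hj
        refine (dd' (L := L) (M := m + 1) j (m + 2) (m + 1) rfl (by omega) (by omega) G₁).trans ?_
        rw [hG₁ ⟨j, by omega⟩ (fne (by omega))]
        dsimp only
        rw [dif_pos (by omega)]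
        exact H1 ⟨j, by omega⟩ _
      have Q2 : L.δ (⟨m + 2, by omega⟩ : Fin (m + 3))
            (L.δ (⟨m + 2, by omega⟩ : Fin (m + 4)) G₁) =
          L.δ (⟨m + 2, by omega⟩ : Fin (m + 3)) y' := by
        refine ((dd' (L := L) (M := m + 1) (m + 2) (m + 3) (m + 2) rfl (le_refl _)
          (by omega) G₁).symm).trans ?_
        rw [hG₁ ⟨m + 3, by omega⟩ (fne (by omega))]
        dsimp only
        rw [dif_neg (by omega)]
      -- step 2: the horn with the degenerate prism faces
      obtain ⟨G₄, hG₄⟩ := exists_horn_filler L hL (m := m + 1) ⟨m + 3, by omega⟩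
        (fun i hi => if h1 : i.1 < m + 1 then
            L.σ (⟨m, by omega⟩ : Fin (m + 2)) (L.δ (⟨i.1, by omega⟩ : Fin (m + 3)) y)
          else if i.1 = m + 1 then y else L.δ (⟨m + 2, by omega⟩ : Fin (m + 4)) G₁)
        (by
          intro a b hab hb ha
          have hab2 : a.1 ≤ b.1 := hab
          have hbv : b.1 + 1 ≠ m + 3 := fun hh => hb (Fin.ext hh)
          have hb3 : b.1 < m + 3 := b.isLt
          dsimp only [Fin.val_succ, Fin.coe_castSucc]
          rcases show b.1 < m ∨ b.1 = m ∨ b.1 = m + 1 by omega with hc | hc | hc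
          · rw [dif_pos (by omega), dif_pos (by omega)]
            exact (ds_le' (L := L) (M := m) a.1 m (m - 1) (by omega) (by omega) (by omega) _).trans
              ((congrArg (L.σ ⟨m - 1, by omega⟩)
                  (dd' (L := L) (M := m) a.1 (b.1 + 1) b.1 rfl (by omega) (by omega) y)).trans
                (ds_le' (L := L) (M := m) b.1 m (m - 1) (by omega) (by omega) (by omega) _).symm)
          · obtain rfl : b = ⟨m, Nat.lt_add_of_pos_right (show 0 < 3 by decide)⟩ := Fin.ext (show b.1 = m by omega)
            rw [dif_neg (by omega), if_pos rfl, dif_pos (by omega)]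
            exact (ds_self' (L := L) (M := m + 1) m (by omega) _).symm
          · obtain rfl : b = ⟨m + 1, Nat.add_lt_add_left (show 1 < 3 by decide) m⟩ := Fin.ext (show b.1 = m + 1 by omega)
            rw [dif_neg (by omega), if_neg (by omega)]
            rcases Nat.lt_or_ge a.1 (m + 1) with hc2 | hc2
            · rw [dif_pos (by omega)]
              exact (Q1 a.1 (by omega)).trans
                (ds_succ' (L := L) (M := m + 1) m (m + 1) rfl (by omega) _).symm
            · obtain rfl : a = ⟨m + 1, Nat.add_lt_add_left (show 1 < 3 by decide) m⟩ := Fin.ext (show a.1 = m + 1 by omega)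
              rw [dif_neg (by omega), if_pos rfl]
              exact Q1 (m + 1) (by omega))
      refine ⟨sameFaces, L.δ (⟨m + 3, by omega⟩ : Fin (m + 4)) G₄, ?_, ?_, ?_⟩
      · refine (dd' (L := L) (M := m + 1) (m + 1) (m + 3) (m + 2) rfl (by omega) (by omega) G₄).trans ?_
        rw [hG₄ ⟨m + 1, by omega⟩ (fne (by omega))]
        dsimp only
        rw [dif_neg (by omega), if_pos rfl]
        rfl
      · refine (dd' (L := L) (M := m + 1) (m + 2) (m + 3) (m + 2) rfl (le_refl _) (by omega) G₄).trans ?_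
        rw [hG₄ ⟨m + 2, by omega⟩ (fne (by omega))]
        dsimp only
        rw [dif_neg (by omega), if_neg (by omega)]
        exact Q2
      · intro m' hm' j hj
        obtain rfl : m = m' := by omega
        simp only [cast_eq]
        have hjv : j.1 < m + 1 := hj
        refine (dd' (L := L) (M := m + 1) j.1 (m + 3) (m + 2) rfl (by omega) (by omega) G₄).trans ?_
        rw [hG₄ ⟨j.1, by omega⟩ (fne (by omega))]
        dsimp only
        rw [dif_pos (by omega)]
        refine (ds_gt' (L := L) (M := m) (m + 2) (m + 1) m rfl (by omega) (by omega) _).trans ?_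
        exact congrArg (L.σ ⟨m, by omega⟩)
          (dd' (L := L) (M := m) j.1 (m + 2) (m + 1) rfl (by omega) (by omega) y).symm
    · -- `k` is not the last face
      have hkv : k.1 ≤ m + 1 := by
        have h2 : k.1 ≠ m + 2 := fun hh => hkl (Fin.ext hh)
        omega
      have hlne : Fin.last (m + 2) ≠ k := fun hh => hkl hh.symm
      -- step 1: produce `w` with the same faces as `y` except the last one,
      -- which is the last face of `y'`
      obtain ⟨G₂, hG₂⟩ := exists_horn_filler L hL (m := m + 1) ⟨m + 2, by omega⟩
        (fun i hi => if h1 : i.1 < m + 1 then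
            L.σ (⟨m, by omega⟩ : Fin (m + 2)) (L.δ (⟨i.1, by omega⟩ : Fin (m + 3)) y)
          else if i.1 = m + 1 then y else Hh (Fin.last (m + 2)) hlne)
        (by
          intro a b hab hb ha
          have hab2 : a.1 ≤ b.1 := hab
          have hbv : b.1 + 1 ≠ m + 2 := fun hh => hb (Fin.ext hh)
          have hav : a.1 ≠ m + 2 := fun hh => ha (Fin.ext hh)
          have hb3 : b.1 < m + 3 := b.isLt
          dsimp only [Fin.val_succ, Fin.coe_castSucc]
          rcases show b.1 < m ∨ b.1 = m ∨ b.1 = m + 2 by omega with hc | hc | hc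
          · rw [dif_pos (by omega), dif_pos (by omega)]
            exact (ds_le' (L := L) (M := m) a.1 m (m - 1) (by omega) (by omega) (by omega) _).trans
              ((congrArg (L.σ ⟨m - 1, by omega⟩)
                  (dd' (L := L) (M := m) a.1 (b.1 + 1) b.1 rfl (by omega) (by omega) y)).trans
                (ds_le' (L := L) (M := m) b.1 m (m - 1) (by omega) (by omega) (by omega) _).symm)
          · obtain rfl : b = ⟨m, Nat.lt_add_of_pos_right (show 0 < 3 by decide)⟩ := Fin.ext (show b.1 = m by omega)
            rw [dif_neg (by omega), if_pos rfl, dif_pos (by omega)]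
            exact (ds_self' (L := L) (M := m + 1) m (by omega) _).symm
          · obtain rfl : b = ⟨m + 2, Nat.add_lt_add_left (show 2 < 3 by decide) m⟩ := Fin.ext (show b.1 = m + 2 by omega)
            rw [dif_neg (by omega), if_neg (by omega)]
            rcases Nat.lt_or_ge a.1 (m + 1) with hc2 | hc2
            · rw [dif_pos (by omega)]
              refine (H3 (Fin.last (m + 2)) hlne a.1 (by omega)).trans ?_
              refine (congrArg (L.σ (Fin.last m))
                (dd' (L := L) (M := m) a.1 (m + 2) (m + 1) rfl (by omega) (by omega) y)).trans ?_
              exact (ds_gt' (L := L) (M := m) (m + 2) (m + 1) m rfl (by omega) (by omega) _).symm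
            · obtain rfl : a = ⟨m + 1, Nat.add_lt_add_left (show 1 < 3 by decide) m⟩ := Fin.ext (show a.1 = m + 1 by omega)
              rw [dif_neg (by omega), if_pos rfl]
              exact H1 (Fin.last (m + 2)) hlne)
      have P1 : ∀ (j : ℕ) (hj : j ≤ m + 1),
          L.δ (⟨j, by omega⟩ : Fin (m + 3)) (L.δ (⟨m + 2, by omega⟩ : Fin (m + 4)) G₂) =
            L.δ (⟨j, by omega⟩ : Fin (m + 3)) y := by
        intro j hj
        refine (dd' (L := L) (M := m + 1) j (m + 2) (m + 1) rfl (by omega) (by omega) G₂).trans ?_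
        rw [hG₂ ⟨j, by omega⟩ (fne (by omega))]
        dsimp only
        rcases Nat.lt_or_ge j (m + 1) with hc | hc
        · rw [dif_pos (by omega)]
          exact ds_succ' (L := L) (M := m + 1) m (m + 1) rfl (by omega) _
        · obtain rfl : j = m + 1 := by omega
          rw [dif_neg (by omega), if_pos rfl]
      have P2 : L.δ (⟨m + 2, by omega⟩ : Fin (m + 3))
            (L.δ (⟨m + 2, by omega⟩ : Fin (m + 4)) G₂) =
          L.δ (⟨m + 2, by omega⟩ : Fin (m + 3)) y' := by
        refine ((dd' (L := L) (M := m + 1) (m + 2) (m + 3) (m + 2) rfl (le_refl _)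
          (by omega) G₂).symm).trans ?_
        rw [hG₂ ⟨m + 3, by omega⟩ (fne (by omega))]
        dsimp only
        rw [dif_neg (by omega), if_neg (by omega)]
        exact H2 (Fin.last (m + 2)) hlne
      -- step 2: the main horn
      obtain ⟨G₃, hG₃⟩ := exists_horn_filler L hL (m := m + 1) ⟨k.1, by omega⟩
        (fun i hi => if h1 : i.1 ≤ m + 1 then
            Hh ⟨i.1, by omega⟩ (Fin.ne_of_val_ne (show i.1 ≠ k.1 from
              fun hh => hi (Fin.ext hh)))
          else if i.1 = m + 2 then L.δ (⟨m + 2, by omega⟩ : Fin (m + 4)) G₂ else y')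
        (by
          intro a b hab hb ha
          have hab2 : a.1 ≤ b.1 := hab
          have hbv : b.1 + 1 ≠ k.1 := fun hh => hb (Fin.ext hh)
          have hav : a.1 ≠ k.1 := fun hh => ha (Fin.ext hh)
          have hb3 : b.1 < m + 3 := b.isLt
          dsimp only [Fin.val_succ, Fin.coe_castSucc]
          rcases show b.1 + 1 ≤ m + 1 ∨ b.1 + 1 = m + 2 ∨ b.1 + 1 = m + 3 by omega
            with hc | hc | hc
          · rw [dif_pos (by omega), dif_pos (by omega)]
            exact (H3 ⟨b.1 + 1, by omega⟩ _ a.1 (by omega)).trans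
              ((congrArg (L.σ (Fin.last m))
                  (dd' (L := L) (M := m) a.1 (b.1 + 1) b.1 rfl (by omega) (by omega) y)).trans
                (H3 ⟨a.1, by omega⟩ _ b.1 (by omega)).symm)
          · obtain rfl : b = ⟨m + 1, Nat.add_lt_add_left (show 1 < 3 by decide) m⟩ := Fin.ext (show b.1 = m + 1 by omega)
            rw [dif_neg (by omega), if_pos rfl, dif_pos (by omega)]
            exact (P1 a.1 (by omega)).trans (H1 ⟨a.1, by omega⟩ _).symm
          · obtain rfl : b = ⟨m + 2, Nat.add_lt_add_left (show 2 < 3 by decide) m⟩ := Fin.ext (show b.1 = m + 2 by omega)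
            rw [dif_neg (by omega), if_neg (by omega)]
            rcases Nat.lt_or_ge a.1 (m + 2) with hc2 | hc2
            · rw [dif_pos (by omega)]
              exact (H2 ⟨a.1, by omega⟩ _).symm
            · obtain rfl : a = ⟨m + 2, Nat.add_lt_add_left (show 2 < 3 by decide) m⟩ := Fin.ext (show a.1 = m + 2 by omega)
              rw [dif_neg (by omega), if_pos rfl]
              exact P2.symm)
      refine ⟨sameFaces, L.δ (⟨k.1, by omega⟩ : Fin (m + 4)) G₃, ?_, ?_, ?_⟩
      · refine ((dd' (L := L) (M := m + 1) k.1 (m + 2) (m + 1) rfl (by omega)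
          (by omega) G₃).symm).trans ?_
        rw [hG₃ ⟨m + 2, by omega⟩ (fne (by omega))]
        dsimp only
        rw [dif_neg (by omega), if_pos rfl]
        exact P1 k.1 hkv
      · refine ((dd' (L := L) (M := m + 1) k.1 (m + 3) (m + 2) rfl (by omega)
          (by omega) G₃).symm).trans ?_
        rw [hG₃ ⟨m + 3, by omega⟩ (fne (by omega))]
        dsimp only
        rw [dif_neg (by omega), if_neg (by omega)]
      · intro m' hm' j hj
        obtain rfl : m = m' := by omega
        simp only [cast_eq]
        have hjv : j.1 < m + 1 := hj
        rcases Nat.lt_or_ge j.1 k.1 with hc | hc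
        · refine (dd' (L := L) (M := m + 1) j.1 k.1 (k.1 - 1) (by omega) (by omega)
            (by omega) G₃).trans ?_
          rw [hG₃ ⟨j.1, by omega⟩ (fne (by omega))]
          dsimp only
          rw [dif_pos (by omega)]
          refine (H3 ⟨j.1, by omega⟩ _ (k.1 - 1) (by omega)).trans ?_
          exact congrArg (L.σ (Fin.last m))
            (dd' (L := L) (M := m) j.1 k.1 (k.1 - 1) (by omega) (by omega) (by omega) y).symm
        · refine ((dd' (L := L) (M := m + 1) k.1 (j.1 + 1) j.1 rfl (by omega)
            (by omega) G₃).symm).trans ?_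
          rw [hG₃ ⟨j.1 + 1, by omega⟩ (fne (by omega))]
          dsimp only
          rw [dif_pos (by omega)]
          refine (H3 ⟨j.1 + 1, by omega⟩ _ k.1 (by omega)).trans ?_
          exact congrArg (L.σ (Fin.last m))
            (dd' (L := L) (M := m) k.1 (j.1 + 1) j.1 rfl (by omega) (by omega) y)
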